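/- Let G be an undirected graph (a directed graph whose edge relation is symmetric) and let M and M′ be two overlapping modules of G. Then the symmetric difference M △ M′ is a module of G; together with closure under union, intersection, and differences, this shows that the family of non-empty modules of an undirected graph is partitive. -/
import Mathlib


variable {V : Type*} [Fintype V]

/-- `M` is a module of the directed graph with edge relation `E`. -/
def IsModule (E : V → V → Prop) (M : Set V) : Prop :=
  ∀ u ∉ M, ∀ v ∈ M, ∀ w ∈ M, (E u v ↔ E u w) ∧ (E v u ↔ E w u)

/-- Two sets overlap: non-disjoint and neither contains the other. -/
def SetOverlap (X Y : Set V) : Prop :=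
  (X ∩ Y).Nonempty ∧ ¬ X ⊆ Y ∧ ¬ Y ⊆ X

/-- In an undirected graph the symmetric difference of two overlapping modules is a
module: the family of non-empty modules of an undirected graph is partitive. -/
theorem stmt_18 (E : V → V → Prop) (hsym : Symmetric E) (M M' : Set V)
    (hM : IsModule E M) (hM' : IsModule E M') (hover : SetOverlap M M') :
    IsModule E ((M \ M') ∪ (M' \ M)) := by
  obtain ⟨⟨a, haM, haM'⟩, hMM', hM'M⟩ := hover
  obtain ⟨c, hcM, hcM'⟩ := Set.not_subset.mp hMM'
  obtain ⟨b, hbM', hbM⟩ := Set.not_subset.mp hM'M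
  have hsiff : ∀ x y : V, E x y ↔ E y x := fun x y => ⟨fun h => hsym h, fun h => hsym h⟩
  intro u hu v hv w hw
  have huM : u ∈ M ↔ u ∈ M' := by
    simp only [Set.mem_union, Set.mem_diff] at hu; tauto
  -- mixed case
  have mix : ∀ x ∈ M \ M', ∀ y ∈ M' \ M, (E u x ↔ E u y) := by
    intro x hx y hy
    by_cases hum : u ∈ M
    · have hum' : u ∈ M' := huM.mp hum
      have h1 := (hM' x hx.2 u hum' y hy.1).1
      have h2 := (hM y hy.2 u hum x hx.1).1
      exact (hsiff u x).trans (h1.trans ((hsiff x y).trans ((h2.symm).trans (hsiff y u))))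
    · have hum' : u ∉ M' := fun h => hum (huM.mpr h)
      exact ((hM u hum x hx.1 a haM).1).trans (hM' u hum' a haM' y hy.1).1
  have caseMM : ∀ x ∈ M \ M', ∀ y ∈ M \ M', (E u x ↔ E u y) := by
    intro x hx y hy
    by_cases hum : u ∈ M
    · have hum' : u ∈ M' := huM.mp hum
      have h1 := (hM' x hx.2 u hum' b hbM').1
      have h2 := (hM b hbM x hx.1 y hy.1).1
      have h3 := (hM' y hy.2 b hbM' u hum').1
      exact (hsiff u x).trans (h1.trans ((hsiff x b).trans (h2.trans
        ((hsiff b y).trans (h3.trans (hsiff y u))))))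
    · exact (hM u hum x hx.1 y hy.1).1
  have caseM'M' : ∀ x ∈ M' \ M, ∀ y ∈ M' \ M, (E u x ↔ E u y) := by
    intro x hx y hy
    by_cases hum' : u ∈ M'
    · have hum : u ∈ M := huM.mpr hum'
      have h1 := (hM x hx.2 u hum c hcM).1
      have h2 := (hM' c hcM' x hx.1 y hy.1).1
      have h3 := (hM y hy.2 c hcM u hum).1
      exact (hsiff u x).trans (h1.trans ((hsiff x c).trans (h2.trans
        ((hsiff c y).trans (h3.trans (hsiff y u))))))
    · exact (hM' u hum' x hx.1 y hy.1).1
  have h1 : E u v ↔ E u w := by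
    rcases hv with hv | hv <;> rcases hw with hw | hw
    · exact caseMM v hv w hw
    · exact mix v hv w hw
    · exact (mix w hw v hv).symm
    · exact caseM'M' v hv w hw
  exact ⟨h1, (hsiff v u).trans (h1.trans (hsiff u w))⟩
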